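/- Let (a_1,…,a_n) be a permutation of [n] and k ∈ ℕ. For each position i ∈ [n], let x(i) be the maximum length of an increasing-first k-modal subsequence ending at position i, and let y(i) be the maximum length of a decreasing-first k-modal subsequence ending at position i. Then the map i ↦ (x(i), y(i)) is injective on [n]. -/

import Mathlib

/-- `b : Fin m → ℤ` is an increasing-first `k`-modal sequence: it can be cut into at most
`k + 1` segments, alternately strictly increasing and strictly decreasing, starting with an
increasing segment (segments may be degenerate). Sequences of length at most 1 always qualify. -/
def IncFirstModal (k : ℕ) {m : ℕ} (b : Fin m → ℤ) : Prop :=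
  ∃ j : ℕ → ℕ, Monotone j ∧ j 0 = 0 ∧ m - 1 ≤ j (k + 1) ∧
    ∀ ℓ s, ℓ ≤ k → j ℓ ≤ s → s + 1 ≤ j (ℓ + 1) →
      ∀ (hs : s < m) (hs1 : s + 1 < m),
        if Even ℓ then b ⟨s, hs⟩ < b ⟨s + 1, hs1⟩ else b ⟨s + 1, hs1⟩ < b ⟨s, hs⟩

/-- `b : Fin m → ℤ` is a decreasing-first `k`-modal sequence: at most `k + 1` alternately
strictly decreasing and strictly increasing segments, starting with a decreasing segment. -/
def DecFirstModal (k : ℕ) {m : ℕ} (b : Fin m → ℤ) : Prop :=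
  ∃ j : ℕ → ℕ, Monotone j ∧ j 0 = 0 ∧ m - 1 ≤ j (k + 1) ∧
    ∀ ℓ s, ℓ ≤ k → j ℓ ≤ s → s + 1 ≤ j (ℓ + 1) →
      ∀ (hs : s < m) (hs1 : s + 1 < m),
        if Even ℓ then b ⟨s + 1, hs1⟩ < b ⟨s, hs⟩ else b ⟨s, hs⟩ < b ⟨s + 1, hs1⟩

/-- `a : Fin n → ℤ` is a permutation of `[n] = {1, …, n}`. -/
def IsPermOn (n : ℕ) (a : Fin n → ℤ) : Prop :=
  Function.Injective a ∧ ∀ i, 1 ≤ a i ∧ a i ≤ (n : ℤ)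

/-- The subsequence selected by the strictly monotone index map `s` ends at position `i`. -/
def EndsAt {n L : ℕ} (s : Fin L → Fin n) (i : Fin n) : Prop :=
  ∃ h : 0 < L, s ⟨L - 1, Nat.sub_lt h Nat.one_pos⟩ = i

/-- The subsequence selected by the strictly monotone index map `s` starts at position `i`. -/
def StartsAt {n L : ℕ} (s : Fin L → Fin n) (i : Fin n) : Prop :=
  ∃ h : 0 < L, s ⟨0, h⟩ = i

/-- Let `x i` be the maximum length of an increasing-first `k`-modal subsequence ending at
position `i` and `y i` the maximum length of a decreasing-first `k`-modal subsequence ending at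
position `i`. Then `i ↦ (x i, y i)` is injective. -/
lemma snoc_at_cast {m : ℕ} (b : Fin (m+1) → ℤ) (c : ℤ) (s : ℕ) (hs : s < m+1) (hs2 : s < m+2) :
    (Fin.snoc b c : Fin (m+2) → ℤ) ⟨s, hs2⟩ = b ⟨s, hs⟩ := by
  have h : (⟨s, hs2⟩ : Fin (m+2)) = Fin.castSucc ⟨s, hs⟩ := rfl
  rw [h, Fin.snoc_castSucc]

lemma snoc_at_top {m : ℕ} (b : Fin (m+1) → ℤ) (c : ℤ) (h : m+1 < m+2) :
    (Fin.snoc b c : Fin (m+2) → ℤ) ⟨m+1, h⟩ = c := by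
  have h2 : (⟨m+1, h⟩ : Fin (m+2)) = Fin.last (m+1) := rfl
  rw [h2, Fin.snoc_last]

lemma extend_modal {k m : ℕ} (b : Fin (m+1) → ℤ) (c : ℤ) (hb : IncFirstModal k b)
    (hstep : ∀ ℓ : ℕ, ¬ (Even ℓ ↔ Even (k+1)) →
      if Even ℓ then b (Fin.last m) < c else c < b (Fin.last m)) :
    IncFirstModal k (Fin.snoc b c) := by
  obtain ⟨j, hmono, h0, hk, hcond⟩ := hb
  have hk' : m ≤ j (k+1) := by simpa using hk
  have hex : ∃ ℓ, m ≤ j ℓ := ⟨k+1, hk'⟩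
  set ℓ0 := Nat.find hex with hℓ0def
  have hℓ0m : m ≤ j ℓ0 := Nat.find_spec hex
  have hℓ0lt : ∀ ℓ, ℓ < ℓ0 → j ℓ < m := fun ℓ h => Nat.lt_of_not_le (Nat.find_min hex h)
  have hℓ0le : ℓ0 ≤ k+1 := Nat.find_le hk'
  by_cases hpar : Even ℓ0 ↔ Even (k+1)
  · by_cases hz : ℓ0 = 0
    · -- m = 0, Even (k+1), k ≥ 1
      have hm0 : m = 0 := by have := hℓ0m; rw [hz, h0] at this; omega
      have hek : Even (k+1) := hpar.mp (by rw [hz]; exact Even.zero)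
      have hk1 : 1 ≤ k := by
        rcases Nat.even_or_odd k with h|h
        · exact absurd hek (by simp [Nat.even_add_one]; exact h)
        · exact h.pos
      subst hm0
      refine ⟨fun ℓ => if ℓ ≤ 1 then 0 else 1, ?_, by simp, ?_, ?_⟩
      · apply monotone_nat_of_le_succ; intro ℓ; split_ifs <;> omega
      · have : ¬ (k+1 ≤ 1) := by omega
        simp [this]
      · intro ℓ s hℓ hs1 hs2 hsm hsm1
        have hs0 : s = 0 := by omega
        subst hs0
        have hℓle : ℓ ≤ 1 := by by_contra h; simp [h] at hs1
        have hℓge : ¬ (ℓ + 1 ≤ 1) := by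
          intro h; have hℓz : ℓ = 0 := by omega
          simp [hℓz] at hs2
        have hℓ1 : ℓ = 1 := by omega
        subst hℓ1
        have := hstep 1 (by simp [hek, Nat.even_add_one])
        simp only [Nat.not_even_one, if_false] at this ⊢
        rw [snoc_at_cast b c 0 (by omega) hsm, snoc_at_top b c hsm1]
        exact this
    · -- case B: extend segment ℓ0 - 1
      refine ⟨fun ℓ => if ℓ < ℓ0 then j ℓ else m+1, ?_, ?_, ?_, ?_⟩
      · apply monotone_nat_of_le_succ; intro ℓ
        rcases Nat.lt_or_ge (ℓ+1) ℓ0 with hc | hc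
        · have h4 := hℓ0lt (ℓ+1) hc
          have h3 := hℓ0lt ℓ (by omega)
          have h5 : j ℓ ≤ j (ℓ+1) := hmono (Nat.le_succ ℓ)
          split_ifs <;> omega
        · rcases Nat.lt_or_ge ℓ ℓ0 with hd | hd
          · have h3 := hℓ0lt ℓ hd
            split_ifs <;> omega
          · split_ifs <;> omega
      · simp [Nat.pos_of_ne_zero hz, h0]
      · have : ¬ (k+1 < ℓ0) := by omega
        simp [this]
      · intro ℓ s hℓ hs1 hs2 hsm hsm1
        by_cases hℓlt : ℓ < ℓ0
        · simp only [if_pos hℓlt] at hs1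
          by_cases hℓ1lt : ℓ + 1 < ℓ0
          · simp only [if_pos hℓ1lt] at hs2
            have hjm : j (ℓ+1) < m := hℓ0lt _ hℓ1lt
            have := hcond ℓ s hℓ hs1 hs2 (by omega) (by omega)
            rw [snoc_at_cast b c s (by omega) hsm, snoc_at_cast b c (s+1) (by omega) hsm1]
            exact this
          · have hℓ1 : ℓ + 1 = ℓ0 := by omega
            simp only [if_neg (by omega : ¬ ℓ + 1 < ℓ0)] at hs2
            by_cases hsm' : s = m
            · -- new step, covering segment ℓ = ℓ0 - 1, parity opposite to ℓ0
              subst hsm'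
              have hps : ¬ (Even ℓ ↔ Even (k+1)) := by
                have h2 : Even (ℓ+1) ↔ ¬ Even ℓ := Nat.even_add_one
                rw [hℓ1] at h2; tauto
              have := hstep ℓ hps
              rw [snoc_at_cast b c s (by omega) hsm, snoc_at_top b c hsm1]
              exact this
            · have hsle : s + 1 ≤ m := by omega
              have := hcond ℓ s hℓ hs1 (by rw [hℓ1]; omega) (by omega) (by omega)
              rw [snoc_at_cast b c s (by omega) hsm, snoc_at_cast b c (s+1) (by omega) hsm1]
              exact this
        · simp only [if_neg hℓlt] at hs1; omega
  · -- case A: new segment at ℓ0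
    have hℓ0k : ℓ0 ≤ k := by
      rcases Nat.lt_or_ge ℓ0 (k+1) with h|h
      · omega
      · exfalso; exact hpar (by rw [show ℓ0 = k+1 by omega])
    refine ⟨fun ℓ => if ℓ < ℓ0 then j ℓ else if ℓ = ℓ0 then m else m+1, ?_, ?_, ?_, ?_⟩
    · apply monotone_nat_of_le_succ; intro ℓ
      rcases Nat.lt_or_ge (ℓ+1) ℓ0 with hc | hc
      · have h4 := hℓ0lt (ℓ+1) hc
        have h3 := hℓ0lt ℓ (by omega)
        have h5 : j ℓ ≤ j (ℓ+1) := hmono (Nat.le_succ ℓ)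
        split_ifs <;> omega
      · rcases Nat.lt_or_ge ℓ ℓ0 with hd | hd
        · have h3 := hℓ0lt ℓ hd
          split_ifs <;> omega
        · split_ifs <;> omega
    · by_cases hz : ℓ0 = 0
      · have hm0 : m = 0 := by have := hℓ0m; rw [hz, h0] at this; omega
        simp [hz, hm0]
      · simp [Nat.pos_of_ne_zero hz, h0]
    · have h1 : ¬ (k+1 < ℓ0) := by omega
      have h2 : ¬ (k+1 = ℓ0) := by omega
      simp [h1, h2]
    · intro ℓ s hℓ hs1 hs2 hsm hsm1
      rcases lt_trichotomy ℓ ℓ0 with hc | hc | hc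
      · simp only [if_pos hc] at hs1
        by_cases hℓ1lt : ℓ + 1 < ℓ0
        · simp only [if_pos hℓ1lt] at hs2
          have hjm : j (ℓ+1) < m := hℓ0lt _ hℓ1lt
          have := hcond ℓ s hℓ hs1 hs2 (by omega) (by omega)
          rw [snoc_at_cast b c s (by omega) hsm, snoc_at_cast b c (s+1) (by omega) hsm1]
          exact this
        · have hℓ1 : ℓ + 1 = ℓ0 := by omega
          simp only [if_neg (by omega : ¬ ℓ + 1 < ℓ0), if_pos hℓ1] at hs2
          have := hcond ℓ s hℓ hs1 (by rw [hℓ1]; omega) (by omega) (by omega)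
          rw [snoc_at_cast b c s (by omega) hsm, snoc_at_cast b c (s+1) (by omega) hsm1]
          exact this
      · simp only [if_neg (by omega : ¬ ℓ < ℓ0), if_pos hc] at hs1
        have hsm' : s = m := by
          simp only [if_neg (by omega : ¬ ℓ + 1 < ℓ0), if_neg (by omega : ¬ ℓ + 1 = ℓ0)] at hs2
          omega
        subst hsm'
        have hpar' : ¬ (Even ℓ ↔ Even (k+1)) := by rw [hc]; exact hpar
        have := hstep ℓ hpar'
        rw [snoc_at_cast b c s (by omega) hsm, snoc_at_top b c hsm1]
        exact this
      · simp only [if_neg (by omega : ¬ ℓ < ℓ0), if_neg (by omega : ¬ ℓ = ℓ0)] at hs1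
        omega

lemma dec_iff_negInc {k m : ℕ} (b : Fin m → ℤ) :
    DecFirstModal k b ↔ IncFirstModal k (fun t => -b t) := by
  constructor <;>
  · rintro ⟨j, h1, h2, h3, h4⟩
    refine ⟨j, h1, h2, h3, fun ℓ s hℓ hs1 hs2 hsm hsm1 => ?_⟩
    have := h4 ℓ s hℓ hs1 hs2 hsm hsm1
    dsimp only at this ⊢
    split_ifs at this ⊢ <;> omega

lemma strictMono_snoc {n L : ℕ} (s : Fin (L+1) → Fin n) (i' : Fin n)
    (hs : StrictMono s) (htop : ∀ t, s t < i') : StrictMono (Fin.snoc s i') := by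
  intro u v huv
  revert huv
  refine Fin.lastCases ?_ ?_ v
  · intro huv
    rcases (Fin.exists_castSucc_eq (i := u)).mpr
      (fun h => absurd huv (by rw [h]; exact lt_irrefl _)) with ⟨u', rfl⟩
    rw [Fin.snoc_last, Fin.snoc_castSucc]
    exact htop u'
  · intro v' huv
    rcases (Fin.exists_castSucc_eq (i := u)).mpr
      (fun h => absurd (h ▸ huv) (Fin.le_last _).not_gt) with ⟨u', rfl⟩
    rw [Fin.snoc_castSucc, Fin.snoc_castSucc]
    exact hs (Fin.castSucc_lt_castSucc_iff.mp huv)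

lemma aux_main {n : ℕ} (k : ℕ) (a : Fin n → ℤ) (x : Fin n → ℕ)
    (hx : ∀ i : Fin n, IsGreatest
      {L : ℕ | ∃ s : Fin L → Fin n, StrictMono s ∧ IncFirstModal k (a ∘ s) ∧ EndsAt s i} (x i))
    (i i' : Fin n) (hlt : i < i')
    (hstep : ∀ ℓ : ℕ, ¬ (Even ℓ ↔ Even (k+1)) →
      if Even ℓ then a i < a i' else a i' < a i) :
    x i < x i' := by
  have h1 := (hx i).1
  have hpos : 0 < x i := by
    obtain ⟨s, -, -, he⟩ := h1
    exact he.1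
  obtain ⟨L, hL⟩ : ∃ L, x i = L + 1 := ⟨x i - 1, by omega⟩
  rw [hL] at h1
  obtain ⟨s, hsm, hmod, he⟩ := h1
  obtain ⟨hp, hlast⟩ := he
  have hlast' : s (Fin.last L) = i := hlast
  have htop : ∀ t, s t < i' := fun t =>
    lt_of_le_of_lt (hlast' ▸ hsm.monotone (Fin.le_last t)) hlt
  have hmem : L + 2 ∈
      {L : ℕ | ∃ s : Fin L → Fin n, StrictMono s ∧ IncFirstModal k (a ∘ s) ∧ EndsAt s i'} := by
    refine ⟨Fin.snoc s i', strictMono_snoc s i' hsm htop, ?_, ?_⟩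
    · have hcomp : a ∘ Fin.snoc s i' = Fin.snoc (a ∘ s) (a i') := Fin.comp_snoc a s i'
      rw [hcomp]
      refine extend_modal (a ∘ s) (a i') hmod ?_
      intro ℓ hℓ
      have : (a ∘ s) (Fin.last L) = a i := by rw [Function.comp_apply, hlast']
      rw [this]
      exact hstep ℓ hℓ
    · refine ⟨by omega, ?_⟩
      have : (⟨L + 2 - 1, by omega⟩ : Fin (L+2)) = Fin.last (L+1) := rfl
      rw [this, Fin.snoc_last]
  have := (hx i').2 hmem
  omega

theorem stmt8 (n : ℕ) (a : Fin n → ℤ) (ha : IsPermOn n a) (k : ℕ) (x y : Fin n → ℕ)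
    (hx : ∀ i : Fin n, IsGreatest
      {L : ℕ | ∃ s : Fin L → Fin n, StrictMono s ∧ IncFirstModal k (a ∘ s) ∧ EndsAt s i} (x i))
    (hy : ∀ i : Fin n, IsGreatest
      {L : ℕ | ∃ s : Fin L → Fin n, StrictMono s ∧ DecFirstModal k (a ∘ s) ∧ EndsAt s i} (y i)) :
    Function.Injective (fun i => (x i, y i)) := by
  have hy' : ∀ i : Fin n, IsGreatest
      {L : ℕ | ∃ s : Fin L → Fin n, StrictMono s ∧ IncFirstModal k ((fun t => -a t) ∘ s)
        ∧ EndsAt s i} (y i) := by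
    intro i0
    have hset : {L : ℕ | ∃ s : Fin L → Fin n, StrictMono s ∧ IncFirstModal k ((fun t => -a t) ∘ s)
        ∧ EndsAt s i0}
        = {L : ℕ | ∃ s : Fin L → Fin n, StrictMono s ∧ DecFirstModal k (a ∘ s) ∧ EndsAt s i0} := by
      ext L
      constructor
      · rintro ⟨s, h1, h2, h3⟩
        exact ⟨s, h1, (dec_iff_negInc (a ∘ s)).mpr h2, h3⟩
      · rintro ⟨s, h1, h2, h3⟩
        exact ⟨s, h1, (dec_iff_negInc (a ∘ s)).mp h2, h3⟩
    rw [hset]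
    exact hy i0
  have main : ∀ i i' : Fin n, i < i' → x i = x i' → y i = y i' → False := by
    intro i i' hilt hxe hye
    have hne : a i ≠ a i' := fun h => (ne_of_lt hilt) (ha.1 h)
    rcases lt_or_gt_of_ne hne with hd | hd
    · rcases Nat.even_or_odd (k+1) with hk | hk
      · have := aux_main k (fun t => -a t) y hy' i i' hilt (fun ℓ h => by
          have hℓodd : ¬ Even ℓ := fun he => h (iff_of_true he hk)
          simp only [if_neg hℓodd]
          omega)
        omega
      · have := aux_main k a x hx i i' hilt (fun ℓ h => by
          have hℓe : Even ℓ := by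
            rcases Nat.even_or_odd ℓ with he | ho
            · exact he
            · exact absurd (iff_of_false (Nat.not_even_iff_odd.mpr ho)
                (Nat.not_even_iff_odd.mpr hk)) h
          simp only [if_pos hℓe]
          exact hd)
        omega
    · rcases Nat.even_or_odd (k+1) with hk | hk
      · have := aux_main k a x hx i i' hilt (fun ℓ h => by
          have hℓodd : ¬ Even ℓ := fun he => h (iff_of_true he hk)
          simp only [if_neg hℓodd]
          exact hd)
        omega
      · have := aux_main k (fun t => -a t) y hy' i i' hilt (fun ℓ h => by
          have hℓe : Even ℓ := by
            rcases Nat.even_or_odd ℓ with he | ho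
            · exact he
            · exact absurd (iff_of_false (Nat.not_even_iff_odd.mpr ho)
                (Nat.not_even_iff_odd.mpr hk)) h
          simp only [if_pos hℓe]
          omega)
        omega
  intro i i' h
  simp only [Prod.mk.injEq] at h
  rcases lt_trichotomy i i' with h1 | h1 | h1
  · exact (main i i' h1 h.1 h.2).elim
  · exact h1
  · exact (main i' i h1 h.1.symm h.2.symm).elim
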